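/- For any reporting strategies ŝ_A : Σ_A → Δ_Σ and ŝ_B : Σ_B → Δ_Σ, the expected payment satisfies Pay(ŝ_A, ŝ_B) = MI^f(X_A;X_B) if and only if f'(g(x_A,x_B)) = f'(K(x_A,x_B)) for every pair (x_A,x_B); in particular, when f' is injective, Pay(ŝ_A, ŝ_B) = MI^f(X_A;X_B) if and only if Σ_y ŝ_A(x_A)(y)·ŝ_B(x_B)(y)/Pr[Y=y] = K(x_A,x_B) for every pair (x_A,x_B). -/

import Mathlib

noncomputable section

variable {SA SB S : Type*}

/-- Joint probability `Pr[X_A = a, X_B = b]` induced by the joint pmf `ν` of `(X_A, X_B, Y)`. -/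
def jAB [Fintype S] (ν : SA → SB → S → ℝ) (a : SA) (b : SB) : ℝ := ∑ y, ν a b y

/-- Joint probability `Pr[X_A = a, Y = y]`. -/
def jAY [Fintype SB] (ν : SA → SB → S → ℝ) (a : SA) (y : S) : ℝ := ∑ b, ν a b y

/-- Joint probability `Pr[X_B = b, Y = y]`. -/
def jBY [Fintype SA] (ν : SA → SB → S → ℝ) (b : SB) (y : S) : ℝ := ∑ a, ν a b y

/-- Marginal probability `Pr[X_A = a]`. -/
def prA [Fintype SB] [Fintype S] (ν : SA → SB → S → ℝ) (a : SA) : ℝ := ∑ b, ∑ y, ν a b y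

/-- Marginal probability `Pr[X_B = b]`. -/
def prB [Fintype SA] [Fintype S] (ν : SA → SB → S → ℝ) (b : SB) : ℝ := ∑ a, ∑ y, ν a b y

/-- Marginal probability `Pr[Y = y]`. -/
def prY [Fintype SA] [Fintype SB] (ν : SA → SB → S → ℝ) (y : S) : ℝ := ∑ a, ∑ b, ν a b y

/-- Pointwise mutual information `K(a,b) = Pr[a,b]/(Pr[a]·Pr[b])`. -/
def K [Fintype SA] [Fintype SB] [Fintype S] (ν : SA → SB → S → ℝ) (a : SA) (b : SB) : ℝ :=
  jAB ν a b / (prA ν a * prB ν b)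

/-- Conditional probability `Pr[Y = y | X_A = a]`. -/
def condA [Fintype SB] [Fintype S] (ν : SA → SB → S → ℝ) (a : SA) (y : S) : ℝ :=
  jAY ν a y / prA ν a

/-- Conditional probability `Pr[Y = y | X_B = b]`. -/
def condB [Fintype SA] [Fintype S] (ν : SA → SB → S → ℝ) (b : SB) (y : S) : ℝ :=
  jBY ν b y / prB ν b

/-- `X_A` and `X_B` are conditionally independent given `Y`:
`Pr[a, b | y] = Pr[a | y] · Pr[b | y]` for all `a, b, y`. -/
def CondIndep [Fintype SA] [Fintype SB] (ν : SA → SB → S → ℝ) : Prop :=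
  ∀ a b y, ν a b y / prY ν y = (jAY ν a y / prY ν y) * (jBY ν b y / prY ν y)

/-- `ν` is a probability mass function. -/
def IsPMF [Fintype SA] [Fintype SB] [Fintype S] (ν : SA → SB → S → ℝ) : Prop :=
  (∀ a b y, 0 ≤ ν a b y) ∧ ∑ a, ∑ b, ∑ y, ν a b y = 1

/-- `p` is a probability vector: nonnegative entries summing to `1`. -/
def IsProbVec {T : Type*} [Fintype T] (p : T → ℝ) : Prop := (∀ t, 0 ≤ p t) ∧ ∑ t, p t = 1

/-- The convex conjugate `f*(x) = sup_t (t·x − f(t))`, as a real-valued supremum. -/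
def fconj (f : ℝ → ℝ) (x : ℝ) : ℝ := sSup (Set.range fun t => t * x - f t)

/-- `c` is a subgradient of `f` at `t`: `f(s) ≥ f(t) + c·(s − t)` for all `s`. -/
def IsSubgradientAt (f : ℝ → ℝ) (t c : ℝ) : Prop := ∀ s : ℝ, f t + c * (s - t) ≤ f s

/-- The f-mutual information `MI^f(X_A;X_B) = Σ_{a,b} Pr[a]·Pr[b]·f(K(a,b))`. -/
def MIf [Fintype SA] [Fintype SB] [Fintype S] (f : ℝ → ℝ) (ν : SA → SB → S → ℝ) : ℝ :=
  ∑ a, ∑ b, prA ν a * prB ν b * f (K ν a b)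

/-- The agreement `g(a,b) = Σ_y h_A(a)(y)·h_B(b)(y)/p(y)`. -/
def gagr [Fintype S] (hA : SA → S → ℝ) (hB : SB → S → ℝ) (p : S → ℝ) (a : SA) (b : SB) : ℝ :=
  ∑ y, hA a y * hB b y / p y

/-- Expected `f`-mutual information gain
`MIG^f(h_A,h_B,p) = Σ Pr[a,b]·f'(g(a,b)) − Σ Pr[a]·Pr[b]·f*(f'(g(a,b)))`. -/
def MIG [Fintype SA] [Fintype SB] [Fintype S] (f : ℝ → ℝ) (ν : SA → SB → S → ℝ)
    (hA : SA → S → ℝ) (hB : SB → S → ℝ) (p : S → ℝ) : ℝ :=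
  ∑ a, ∑ b, jAB ν a b * deriv f (gagr hA hB p a b)
    - ∑ a, ∑ b, prA ν a * prB ν b * fconj f (deriv f (gagr hA hB p a b))

/-- Each agent's expected payment in the multi-task common ground mechanism `MCG(f)`. -/
def Pay [Fintype SA] [Fintype SB] [Fintype S] (f : ℝ → ℝ) (ν : SA → SB → S → ℝ)
    (sA : SA → S → ℝ) (sB : SB → S → ℝ) : ℝ :=
  MIG f ν sA sB (prY ν)

/-- `({a^{x_A}}, {b^{x_B}}, r)` is a solution of the agreement system:
probability vectors, `r` strictly positive, with
`Σ_y a^{x_A}(y)·b^{x_B}(y)/r(y) = K(x_A,x_B)` for all `x_A, x_B`. -/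
def AgreementSolution [Fintype SA] [Fintype SB] [Fintype S] (ν : SA → SB → S → ℝ)
    (a : SA → S → ℝ) (b : SB → S → ℝ) (r : S → ℝ) : Prop :=
  (∀ xa, IsProbVec (a xa)) ∧ (∀ xb, IsProbVec (b xb)) ∧ IsProbVec r ∧ (∀ y, 0 < r y) ∧
    ∀ xa xb, (∑ y, a xa y * b xb y / r y) = K ν xa xb

/-- The prior is well-defined: any two solutions of the agreement system coincide
up to a permutation of `Σ`. -/
def WellDefinedPrior [Fintype SA] [Fintype SB] [Fintype S] (ν : SA → SB → S → ℝ) : Prop :=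
  ∀ (a : SA → S → ℝ) (b : SB → S → ℝ) (r : S → ℝ)
    (c : SA → S → ℝ) (d : SB → S → ℝ) (r' : S → ℝ),
    AgreementSolution ν a b r → AgreementSolution ν c d r' →
    ∃ π : Equiv.Perm S, ∀ y, r (π y) = r' y ∧ (∀ xa, a xa (π y) = c xa y)
      ∧ (∀ xb, b xb (π y) = d xb y)

/-- The prior is stable: fixing the truthful `A`-side (resp. `B`-side) of the agreement
system, the only solution for the other side is the truthful one. -/
def StablePrior [Fintype SA] [Fintype SB] [Fintype S] (ν : SA → SB → S → ℝ) : Prop :=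
  (∀ b : SB → S → ℝ, (∀ xb, IsProbVec (b xb)) →
    (∀ xa xb, (∑ y, condA ν xa y * b xb y / prY ν y) = K ν xa xb) →
    ∀ xb y, b xb y = condB ν xb y) ∧
  (∀ a : SA → S → ℝ, (∀ xa, IsProbVec (a xa)) →
    (∀ xa xb, (∑ y, a xa y * condB ν xb y / prY ν y) = K ν xa xb) →
    ∀ xa y, a xa y = condA ν xa y)


/-- Tangent line of a convex differentiable function lies below the graph. -/
lemma tangent_le_aux {f : ℝ → ℝ} (hconv : ConvexOn ℝ Set.univ f)
    (hdiff : Differentiable ℝ f) (x y : ℝ) :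
    f x + deriv f x * (y - x) ≤ f y := by
  rcases lt_trichotomy x y with h | rfl | h
  · have := hconv.deriv_le_slope (Set.mem_univ x) (Set.mem_univ y) h (hdiff x)
    rw [slope_def_field] at this
    have h0 : 0 < y - x := by linarith
    have := (le_div_iff₀ h0).mp this
    nlinarith
  · simp
  · have := hconv.slope_le_deriv (Set.mem_univ y) (Set.mem_univ x) h (hdiff x)
    rw [slope_def_field] at this
    have h0 : 0 < x - y := by linarith
    have := (div_le_iff₀ h0).mp this
    nlinarith

lemma deriv_mono_aux {f : ℝ → ℝ} (hconv : ConvexOn ℝ Set.univ f)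
    (hdiff : Differentiable ℝ f) : Monotone (deriv f) := by
  have := hconv.monotoneOn_deriv (fun x _ => hdiff x)
  exact fun x y hxy => this (Set.mem_univ x) (Set.mem_univ y) hxy

/-- Equality in the tangent inequality iff equal derivatives. -/
lemma tangent_eq_iff_aux {f : ℝ → ℝ} (hconv : ConvexOn ℝ Set.univ f)
    (hdiff : Differentiable ℝ f) (x y : ℝ) :
    f x + deriv f x * (y - x) = f y ↔ deriv f x = deriv f y := by
  have hmono := deriv_mono_aux hconv hdiff
  constructor
  · intro h
    set φ : ℝ → ℝ := fun t => f t - (f x + deriv f x * (t - x)) with hφdef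
    have haff : HasDerivAt (fun t : ℝ => f x + deriv f x * (t - x)) (deriv f x) y := by
      simpa using (((hasDerivAt_id y).sub_const x).const_mul (deriv f x)).const_add (f x)
    have hφ : HasDerivAt φ (deriv f y - deriv f x) y := (hdiff y).hasDerivAt.sub haff
    have hmin : IsLocalMin φ y := by
      apply Filter.Eventually.of_forall
      intro t
      have h1 := tangent_le_aux hconv hdiff x t
      simp only [hφdef]
      have hy0 : f y - (f x + deriv f x * (y - x)) = 0 := by linarith
      linarith
    have := hmin.hasDerivAt_eq_zero hφ
    linarith
  · intro h
    rcases lt_trichotomy x y with hlt | rfl | hlt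
    · obtain ⟨c, hc, hceq⟩ := exists_deriv_eq_slope f hlt
        (hdiff.continuous.continuousOn) (fun z _ => (hdiff z).differentiableWithinAt)
      have h1 : deriv f x ≤ deriv f c := hmono hc.1.le
      have h2 : deriv f c ≤ deriv f y := hmono hc.2.le
      have : deriv f c = deriv f x := le_antisymm (h ▸ h2) h1
      rw [this] at hceq
      have h0 : y - x ≠ 0 := by linarith
      field_simp at hceq
      linarith
    · ring
    · obtain ⟨c, hc, hceq⟩ := exists_deriv_eq_slope f hlt
        (hdiff.continuous.continuousOn) (fun z _ => (hdiff z).differentiableWithinAt)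
      have h1 : deriv f y ≤ deriv f c := hmono hc.1.le
      have h2 : deriv f c ≤ deriv f x := hmono hc.2.le
      have : deriv f c = deriv f x := le_antisymm h2 (h ▸ h1)
      rw [this] at hceq
      have h0 : x - y ≠ 0 := by linarith
      field_simp at hceq
      linarith

/-- For any reporting strategies, the expected payment in `MCG(f)` equals
`MI^f(X_A;X_B)` iff `f'(g(a,b)) = f'(K(a,b))` for every pair `(a,b)`; in particular,
when `f'` is injective, it equals `MI^f(X_A;X_B)` iff
`Σ_y ŝ_A(a)(y)·ŝ_B(b)(y)/Pr[Y=y] = K(a,b)` for every pair `(a,b)`. -/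
theorem stmt_7 [Fintype SA] [Fintype SB] [Fintype S] [Nonempty SA] [Nonempty SB] [Nonempty S]
    (ν : SA → SB → S → ℝ) (hν : IsPMF ν)
    (hA : ∀ a, 0 < prA ν a) (hB : ∀ b, 0 < prB ν b) (hY : ∀ y, 0 < prY ν y)
    (f : ℝ → ℝ) (hconv : ConvexOn ℝ Set.univ f) (hdiff : Differentiable ℝ f) (hf1 : f 1 = 0)
    (hconj : ∀ t : ℝ, fconj f (deriv f t) = t * deriv f t - f t)
    (sA : SA → S → ℝ) (sB : SB → S → ℝ)
    (hsA : ∀ a, IsProbVec (sA a)) (hsB : ∀ b, IsProbVec (sB b)) :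
    (Pay f ν sA sB = MIf f ν
      ↔ ∀ a b, deriv f (gagr sA sB (prY ν) a b) = deriv f (K ν a b))
    ∧ (Function.Injective (deriv f) →
        (Pay f ν sA sB = MIf f ν ↔ ∀ a b, gagr sA sB (prY ν) a b = K ν a b)) := by
  classical
  set g := fun a b => gagr sA sB (prY ν) a b with hg
  set T : SA → SB → ℝ := fun a b =>
    prA ν a * prB ν b * (f (g a b) + deriv f (g a b) * (K ν a b - g a b) - f (K ν a b))
    with hT
  have hjab : ∀ a b, jAB ν a b = prA ν a * prB ν b * K ν a b := by
    intro a b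
    have hpos : prA ν a * prB ν b ≠ 0 := (mul_pos (hA a) (hB b)).ne'
    rw [K]
    field_simp
    rw [mul_assoc, mul_div_assoc, div_self hpos, mul_one]
  have key : Pay f ν sA sB - MIf f ν = ∑ a, ∑ b, T a b := by
    unfold Pay MIG MIf
    rw [sub_sub, ← Finset.sum_add_distrib, ← Finset.sum_sub_distrib]
    apply Finset.sum_congr rfl
    intro a _
    rw [← Finset.sum_add_distrib, ← Finset.sum_sub_distrib]
    apply Finset.sum_congr rfl
    intro b _
    rw [hconj, hjab a b]
    simp only [hT, hg]
    ring
  have hTnonpos : ∀ a b, T a b ≤ 0 := by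
    intro a b
    have := tangent_le_aux hconv hdiff (g a b) (K ν a b)
    have hpos : 0 < prA ν a * prB ν b := mul_pos (hA a) (hB b)
    simp only [hT]
    exact mul_nonpos_of_nonneg_of_nonpos hpos.le (by linarith)
  have hTzero : ∀ a b, (T a b = 0 ↔ deriv f (g a b) = deriv f (K ν a b)) := by
    intro a b
    have hpos : prA ν a * prB ν b ≠ 0 := (mul_pos (hA a) (hB b)).ne' 
    rw [hT]
    simp only [mul_eq_zero, hpos, false_or]
    rw [← tangent_eq_iff_aux hconv hdiff (g a b) (K ν a b)]
    constructor <;> intro h <;> linarith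
  have hmain : Pay f ν sA sB = MIf f ν ↔
      ∀ a b, deriv f (g a b) = deriv f (K ν a b) := by
    rw [← sub_eq_zero, key]
    rw [← Finset.sum_product']
    rw [Finset.sum_eq_zero_iff_of_nonpos (fun p _ => hTnonpos p.1 p.2)]
    constructor
    · intro h a b
      exact (hTzero a b).mp (h (a, b) (Finset.mem_product.mpr ⟨Finset.mem_univ a, Finset.mem_univ b⟩))
    · intro h p _
      exact (hTzero p.1 p.2).mpr (h p.1 p.2)
  refine ⟨hmain, fun hinj => ?_⟩
  rw [hmain]
  exact ⟨fun h a b => hinj (h a b), fun h a b => by simp only [hg]; rw [h a b]⟩
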